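/- Let a ≠ 0, E, L, Q, r, e ∈ ℝ with E² < 1, let Δ^{KN} := r² + a² + e² − 2r ≠ 0 and P := E(r²+a²) − La, and let z₋, z₊ satisfy 0 < z₋ < min(1, z₊) and a²(1−E²)z² − (a²(1−E²)+L²+Q)z + Q = a²(1−E²)(z−z₋)(z−z₊) for all z. Then the change in azimuth over a quarter of a latitudinal oscillation, Δφ^{GTR} = ∫₀^{z₋} [ (aP/Δ^{KN} − aE) + L/(1−z) ] dz / (2√z · |a|·√(1−E²) · √((z₊−z)(z₋−z))), equals (π/(2|a|√(1−E²)√z₊)) · [ L·F₁(1/2, 1/2, 1; 1; z₋/z₊, z₋) + (aP/Δ^{KN} − aE)·F(1/2, 1/2; 1; z₋/z₊) ]. -/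

import Mathlib

open MeasureTheory Real Set intervalIntegral


/-- The Pochhammer symbol `(q)_k = q(q+1)⋯(q+k−1)`. -/
noncomputable def poch (q : ℝ) (k : ℕ) : ℝ := ∏ i ∈ Finset.range k, (q + (i : ℝ))

/-- The Gauss hypergeometric series `F(a,b;c;x) = Σ_n (a)_n (b)_n / ((c)_n n!) xⁿ`. -/
noncomputable def gaussF (a b c x : ℝ) : ℝ :=
  ∑' n : ℕ, poch a n * poch b n / (poch c n * (n.factorial : ℝ)) * x ^ n

/-- Appell's first hypergeometric series
`F₁(α,β,β′;γ;x,y) = Σ_{m,n} (α)_{m+n}(β)_m(β′)_n/((γ)_{m+n} m! n!) x^m y^n`. -/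
noncomputable def appellF1 (α β β' γ x y : ℝ) : ℝ :=
  ∑' p : ℕ × ℕ,
    poch α (p.1 + p.2) * poch β p.1 * poch β' p.2 /
        (poch γ (p.1 + p.2) * (p.1.factorial : ℝ) * (p.2.factorial : ℝ)) *
      x ^ p.1 * y ^ p.2

/-- frame dragging of a timelike spherical Kerr–Newman orbit.  With
`Δ^{KN} = r²+a²+e²−2r ≠ 0`, `P = E(r²+a²) − La`, and `z∓` (written `zm`, `zp`) the
roots of `a²(1−E²)z² − (a²(1−E²)+L²+Q)z + Q`, the azimuthal advance over a quarter
latitudinal oscillation equals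
`(π/(2|a|√(1−E²)√z₊))[L·F₁(1/2,1/2,1;1;z₋/z₊,z₋) + (aP/Δ−aE)·F(1/2,1/2;1;z₋/z₊)]`. -/


lemma poch_zero (q : ℝ) : poch q 0 = 1 := by simp [poch]

lemma poch_succ (q : ℝ) (k : ℕ) : poch q (k + 1) = poch q k * (q + k) := by
  simp [poch, Finset.prod_range_succ]

lemma poch_one (k : ℕ) : poch 1 k = k.factorial := by
  induction k with
  | zero => simp [poch]
  | succ n ih => rw [poch_succ, ih, Nat.factorial_succ]; push_cast; ring

lemma poch_half_nonneg (k : ℕ) : 0 ≤ poch (1/2) k := by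
  apply Finset.prod_nonneg; intro i _; positivity

/-- `a k = (1/2)_k / k!`. -/
noncomputable def acoef (k : ℕ) : ℝ := poch (1/2) k / k.factorial

lemma acoef_nonneg (k : ℕ) : 0 ≤ acoef k := by
  have := poch_half_nonneg k; have : (0:ℝ) < k.factorial := by positivity
  unfold acoef; positivity

lemma acoef_le_one (k : ℕ) : acoef k ≤ 1 := by
  rw [acoef, div_le_one (by positivity)]
  rw [← poch_one k]
  apply Finset.prod_le_prod
  · intro i _; positivity
  · intro i _; linarith

lemma acoef_succ (k : ℕ) : acoef (k+1) = acoef k * ((k + 1/2) / (k+1)) := by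
  rw [acoef, acoef, poch_succ, Nat.factorial_succ]
  have h1 : (0:ℝ) < k.factorial := by exact_mod_cast k.factorial_pos
  push_cast
  field_simp
  ring

/-- `∫₀^{π/2} sin^{2k} = π/2 * a_k`. -/
lemma integral_sin_pow_even' (k : ℕ) :
    ∫ θ in (0:ℝ)..(π/2), Real.sin θ ^ (2*k) = π/2 * acoef k := by
  induction k with
  | zero => simp [acoef, poch_zero]
  | succ n ih =>
    have h := integral_sin_pow (a := 0) (b := π/2) (2*n)
    have h2 : 2 * (n+1) = 2*n + 2 := by ring
    rw [h2, h, ih]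
    simp [Real.cos_pi_div_two, Real.sin_pi_div_two]
    rw [acoef_succ]
    push_cast
    field_simp

lemma hasDeriv_H (c : ℝ) (hc : 0 < c) (θ : ℝ) :
    HasDerivAt (fun t => (t + Real.arctan ((c-1) * Real.sin t * Real.cos t /
        (1 + (c-1) * Real.sin t ^ 2))) / c)
      ((1 - (1 - c^2) * Real.sin θ ^ 2)⁻¹) θ := by
  have hs := Real.hasDerivAt_sin θ
  have hco := Real.hasDerivAt_cos θ
  set s := Real.sin θ with hs_def
  set co := Real.cos θ with hco_def
  have hpyth : s^2 + co^2 = 1 := Real.sin_sq_add_cos_sq θ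
  have hco2 : co^2 = 1 - s^2 := by linarith
  have hs1 : s^2 ≤ 1 := by nlinarith [sq_nonneg co]
  have hD : (0:ℝ) < 1 + (c-1) * s ^ 2 := by
    rcases le_or_gt c 1 with h | h
    · nlinarith [sq_nonneg s]
    · nlinarith [sq_nonneg s]
  set N := (c-1) * s * co with hN_def
  set D := 1 + (c-1) * s^2 with hD_def
  set Nd := (c-1) * (co^2 - s^2) * D - N * ((c-1) * (2 * s * co)) with hNd_def
  have hN : HasDerivAt (fun t => (c-1) * Real.sin t * Real.cos t)
      ((c-1) * (co^2 - s^2)) θ := by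
    have : HasDerivAt (fun t => (c-1) * Real.sin t * Real.cos t) _ θ := (hs.const_mul (c-1)).mul hco
    convert this using 1
    ring
  have hDen : HasDerivAt (fun t => 1 + (c-1) * Real.sin t ^ 2)
      ((c-1) * (2 * s * co)) θ := by
    have : HasDerivAt (fun t => 1 + (c-1) * Real.sin t ^ 2) _ θ := ((hs.pow 2).const_mul (c-1)).const_add 1
    convert this using 1
    push_cast
    ring
  have hq : HasDerivAt (fun t => (c-1) * Real.sin t * Real.cos t /
      (1 + (c-1) * Real.sin t ^ 2)) (Nd / D^2) θ := hN.div hDen (ne_of_gt hD)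
  have harctan := hq.arctan
  have hfull := ((hasDerivAt_id θ).add harctan).div_const c
  have hDN : D^2 + N^2 = c^2 * s^2 + co^2 := by
    rw [hD_def, hN_def]
    linear_combination ((c-1)^2 * s^2 - 1) * hco2
  have hsum : Nd + (D^2 + N^2) = c := by
    rw [hNd_def, hD_def, hN_def]
    linear_combination (c-1) * hco2
  have hpos : (0:ℝ) < c^2 * s^2 + co^2 := by nlinarith [sq_nonneg (c*s), sq_nonneg co, mul_pos hc hc]
  have hDN0 : D^2 + N^2 ≠ 0 := by rw [hDN]; exact ne_of_gt hpos
  have key : (1 + 1/(1 + (N/D)^2) * (Nd / D^2)) / c = (1 - (1-c^2) * s^2)⁻¹ := by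
    have e0 : 1 - (1-c^2) * s^2 = c^2 * s^2 + co^2 := by linear_combination -hco2
    have e1 : 1 + (N/D)^2 = (D^2 + N^2) / D^2 := by
      field_simp
    have e2 : 1/(1 + (N/D)^2) * (Nd / D^2) = Nd / (D^2 + N^2) := by
      rw [e1, one_div, inv_div, div_mul_div_comm, mul_comm (D^2) Nd,
        mul_div_mul_right _ _ (pow_ne_zero 2 hD.ne')]
    rw [e0, e2, ← hDN]
    have e3 : 1 + Nd/(D^2+N^2) = c / (D^2+N^2) := by
      rw [eq_div_iff hDN0, add_mul, div_mul_cancel₀ _ hDN0]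
      linarith [hsum]
    rw [e3, div_div, mul_comm (D^2+N^2) c, ← div_div, div_self hc.ne', one_div]
  rw [← key]
  simpa using hfull

lemma integral_inv_one_sub_mul_sin_sq {w : ℝ} (hw0 : 0 ≤ w) (hw1 : w < 1) :
    ∫ θ in (0:ℝ)..(π/2), (1 - w * Real.sin θ ^ 2)⁻¹ = π / (2 * Real.sqrt (1-w)) := by
  have h1w : (0:ℝ) < 1 - w := by linarith
  set c := Real.sqrt (1-w) with hc_def
  have hc : 0 < c := Real.sqrt_pos.mpr h1w
  have hc2 : c^2 = 1 - w := Real.sq_sqrt h1w.le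
  have hw : w = 1 - c^2 := by linarith
  have hcont : Continuous fun θ : ℝ => (1 - w * Real.sin θ ^ 2)⁻¹ := by
    apply Continuous.inv₀
    · fun_prop
    · intro θ
      have : Real.sin θ ^ 2 ≤ 1 := Real.sin_sq_le_one θ
      nlinarith [sq_nonneg (Real.sin θ)]
  have := intervalIntegral.integral_eq_sub_of_hasDerivAt
    (f := fun t => (t + Real.arctan ((c-1) * Real.sin t * Real.cos t /
        (1 + (c-1) * Real.sin t ^ 2))) / c)
    (f' := fun θ => (1 - w * Real.sin θ ^ 2)⁻¹)
    (a := 0) (b := π/2)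
    (fun θ _ => by rw [hw]; exact hasDeriv_H c hc θ)
    (hcont.intervalIntegrable 0 (π/2))
  rw [this]
  simp [Real.sin_pi_div_two, Real.cos_pi_div_two, Real.arctan_zero]
  ring

lemma my_integral_tsum {ι : Type*} [Countable ι] {f : ι → ℝ → ℝ} {C : ι → ℝ}
    (hcont : ∀ i, Continuous (f i)) (hC : ∀ i θ, ‖f i θ‖ ≤ C i) (hCs : Summable C) (a b : ℝ) :
    ∫ θ in Ioc a b, (∑' i, f i θ) = ∑' i, ∫ θ in Ioc a b, f i θ := by
  apply MeasureTheory.integral_tsum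
  · intro i; exact (hcont i).aestronglyMeasurable
  · have hC0 : ∀ i, 0 ≤ C i := fun i => le_trans (norm_nonneg _) (hC i a)
    have hb : ∑' i, ∫⁻ θ, ‖f i θ‖₊ ∂(volume.restrict (Ioc a b))
        ≤ (∑' i, ENNReal.ofReal (C i)) * volume (Ioc a b) := by
      rw [← ENNReal.tsum_mul_right]
      apply ENNReal.tsum_le_tsum
      intro i
      calc ∫⁻ θ, ‖f i θ‖₊ ∂(volume.restrict (Ioc a b))
          ≤ ∫⁻ _, ENNReal.ofReal (C i) ∂(volume.restrict (Ioc a b)) := by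
            refine lintegral_mono fun θ => ?_
            rw [← enorm_eq_nnnorm, ← ofReal_norm]
            exact ENNReal.ofReal_le_ofReal (hC i θ)
        _ = ENNReal.ofReal (C i) * volume (Ioc a b) := by
            rw [lintegral_const, Measure.restrict_apply MeasurableSet.univ, Set.univ_inter]
    refine ne_top_of_le_ne_top ?_ hb
    apply ENNReal.mul_ne_top
    · rw [← ENNReal.ofReal_tsum_of_nonneg hC0 hCs]
      exact ENNReal.ofReal_ne_top
    · exact (measure_Ioc_lt_top).ne

lemma hasSum_acoef_mul_pow {w : ℝ} (hw0 : 0 ≤ w) (hw1 : w < 1) :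
    HasSum (fun m => acoef m * w ^ m) ((Real.sqrt (1-w))⁻¹) := by
  have hterm_nonneg : ∀ m, 0 ≤ acoef m * w ^ m := fun m =>
    mul_nonneg (acoef_nonneg m) (pow_nonneg hw0 m)
  have hsummable : Summable (fun m => acoef m * w ^ m) := by
    apply Summable.of_nonneg_of_le hterm_nonneg
      (fun m => by
        calc acoef m * w ^ m ≤ 1 * w ^ m := by
              apply mul_le_mul_of_nonneg_right (acoef_le_one m) (pow_nonneg hw0 m)
          _ = w ^ m := one_mul _)
    exact summable_geometric_of_lt_one hw0 hw1
  rw [hsummable.hasSum_iff]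
  set f : ℕ → ℝ → ℝ := fun m θ => w ^ m * Real.sin θ ^ (2*m) with hf_def
  have hswap : ∫ θ in Ioc (0:ℝ) (π/2), (∑' m, f m θ) = ∑' m, ∫ θ in Ioc (0:ℝ) (π/2), f m θ := by
    apply my_integral_tsum (C := fun m => w ^ m)
    · intro m; fun_prop
    · intro m θ
      rw [hf_def]
      simp only [norm_mul, norm_pow]
      calc ‖w‖^m * ‖Real.sin θ‖^(2*m) ≤ ‖w‖^m * 1 := by
            apply mul_le_mul_of_nonneg_left _ (by positivity)
            exact pow_le_one₀ (norm_nonneg _) (by simpa using Real.abs_sin_le_one θ)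
        _ = w ^ m := by rw [mul_one, Real.norm_eq_abs, abs_of_nonneg hw0]
    · exact summable_geometric_of_lt_one hw0 hw1
  have hpt : ∀ θ : ℝ, (∑' m, f m θ) = (1 - w * Real.sin θ^2)⁻¹ := by
    intro θ
    have h1 : 0 ≤ w * Real.sin θ^2 := mul_nonneg hw0 (sq_nonneg _)
    have h2 : w * Real.sin θ^2 < 1 :=
      lt_of_le_of_lt (by nlinarith [Real.sin_sq_le_one θ]) hw1
    rw [← tsum_geometric_of_lt_one h1 h2]
    apply tsum_congr
    intro m
    show w ^ m * Real.sin θ ^ (2*m) = (w * Real.sin θ ^ 2) ^ m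
    rw [mul_pow, pow_mul]
  have hint : ∀ m, ∫ θ in Ioc (0:ℝ) (π/2), f m θ = w ^ m * (π/2 * acoef m) := by
    intro m
    simp only [hf_def]
    rw [MeasureTheory.integral_const_mul, ← intervalIntegral.integral_of_le (by positivity),
      integral_sin_pow_even']
  calc ∑' m, acoef m * w ^ m
      = ∑' m, (2/π) * (w ^ m * (π/2 * acoef m)) := by
        apply tsum_congr; intro m
        have : π ≠ 0 := Real.pi_ne_zero
        field_simp
    _ = (2/π) * ∑' m, ∫ θ in Ioc (0:ℝ) (π/2), f m θ := by
        rw [tsum_mul_left]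
        congr 1
        apply tsum_congr
        intro m
        rw [hint m]
    _ = (2/π) * ∫ θ in Ioc (0:ℝ) (π/2), (∑' m, f m θ) := by rw [hswap]
    _ = (2/π) * ∫ θ in Ioc (0:ℝ) (π/2), (1 - w * Real.sin θ^2)⁻¹ := by
        congr 1
        apply setIntegral_congr_fun measurableSet_Ioc
        intro θ _
        exact hpt θ
    _ = (2/π) * (π / (2 * Real.sqrt (1-w))) := by
        rw [← intervalIntegral.integral_of_le (by positivity),
          integral_inv_one_sub_mul_sin_sq hw0 hw1]
    _ = (Real.sqrt (1-w))⁻¹ := by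
        have hne : Real.sqrt (1-w) ≠ 0 :=
          (Real.sqrt_pos.mpr (by linarith : (0:ℝ) < 1-w)).ne'
        field_simp



lemma sin_sq_mem {x : ℝ} (hx0 : 0 ≤ x) (hx1 : x < 1) (θ : ℝ) :
    0 ≤ x * Real.sin θ ^ 2 ∧ x * Real.sin θ ^ 2 < 1 :=
  ⟨mul_nonneg hx0 (sq_nonneg _),
    lt_of_le_of_lt (by nlinarith [Real.sin_sq_le_one θ, sq_nonneg (Real.sin θ)]) hx1⟩

lemma sqrt_one_sub_pos {x : ℝ} (hx0 : 0 ≤ x) (hx1 : x < 1) (θ : ℝ) :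
    0 < Real.sqrt (1 - x * Real.sin θ ^ 2) := by
  have h := sin_sq_mem hx0 hx1 θ
  exact Real.sqrt_pos.mpr (by linarith [h.2])

lemma cont_inv_sqrt {x : ℝ} (hx0 : 0 ≤ x) (hx1 : x < 1) :
    Continuous fun θ => (Real.sqrt (1 - x * Real.sin θ ^ 2))⁻¹ := by
  apply Continuous.inv₀
  · fun_prop
  · exact fun θ => (sqrt_one_sub_pos hx0 hx1 θ).ne'

lemma gauss_integral {x : ℝ} (hx0 : 0 ≤ x) (hx1 : x < 1) :
    ∫ θ in (0:ℝ)..(π/2), (Real.sqrt (1 - x * Real.sin θ ^ 2))⁻¹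
      = π/2 * gaussF (1/2) (1/2) 1 x := by
  rw [intervalIntegral.integral_of_le (by positivity)]
  set f : ℕ → ℝ → ℝ := fun m θ => acoef m * x ^ m * Real.sin θ ^ (2*m) with hf_def
  have hpt : ∀ θ : ℝ, (Real.sqrt (1 - x * Real.sin θ ^ 2))⁻¹ = ∑' m, f m θ := by
    intro θ
    obtain ⟨h1, h2⟩ := sin_sq_mem hx0 hx1 θ
    rw [← (hasSum_acoef_mul_pow h1 h2).tsum_eq]
    apply tsum_congr
    intro m
    show acoef m * (x * Real.sin θ^2)^m = acoef m * x ^ m * Real.sin θ ^ (2*m)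
    rw [mul_pow, pow_mul, mul_assoc]
  have hswap : ∫ θ in Ioc (0:ℝ) (π/2), (∑' m, f m θ) = ∑' m, ∫ θ in Ioc (0:ℝ) (π/2), f m θ := by
    apply my_integral_tsum (C := fun m => x ^ m)
    · intro m; fun_prop
    · intro m θ
      simp only [hf_def, norm_mul, norm_pow]
      have h1 : ‖acoef m‖ ≤ 1 := by
        rw [Real.norm_eq_abs, abs_of_nonneg (acoef_nonneg m)]; exact acoef_le_one m
      have h2 : ‖Real.sin θ‖ ^ (2*m) ≤ 1 :=
        pow_le_one₀ (norm_nonneg _) (by simpa using Real.abs_sin_le_one θ)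
      have h3 : ‖x‖ ^ m = x ^ m := by rw [Real.norm_eq_abs, abs_of_nonneg hx0]
      calc ‖acoef m‖ * ‖x‖ ^ m * ‖Real.sin θ‖ ^ (2*m) ≤ 1 * ‖x‖^m * 1 := by
            apply mul_le_mul (mul_le_mul h1 le_rfl (by positivity) zero_le_one) h2 (by positivity)
            positivity
        _ = x ^ m := by rw [one_mul, mul_one, h3]
    · exact summable_geometric_of_lt_one hx0 hx1
  have hint : ∀ m, ∫ θ in Ioc (0:ℝ) (π/2), f m θ = acoef m * x ^ m * (π/2 * acoef m) := by
    intro m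
    simp only [hf_def]
    rw [MeasureTheory.integral_const_mul, ← intervalIntegral.integral_of_le (by positivity),
      integral_sin_pow_even']
  rw [setIntegral_congr_fun measurableSet_Ioc (fun θ _ => hpt θ), hswap]
  rw [gaussF, ← tsum_mul_left]
  apply tsum_congr
  intro m
  rw [hint m, poch_one]
  have h1 : (0:ℝ) < m.factorial := by exact_mod_cast m.factorial_pos
  rw [acoef]
  field_simp

lemma appell_integral {x y : ℝ} (hx0 : 0 ≤ x) (hx1 : x < 1) (hy0 : 0 ≤ y) (hy1 : y < 1) :
    ∫ θ in (0:ℝ)..(π/2),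
        (1 - y * Real.sin θ ^ 2)⁻¹ * (Real.sqrt (1 - x * Real.sin θ ^ 2))⁻¹
      = π/2 * appellF1 (1/2) (1/2) 1 1 x y := by
  rw [intervalIntegral.integral_of_le (by positivity)]
  set f : ℕ × ℕ → ℝ → ℝ :=
    fun p θ => acoef p.1 * x ^ p.1 * y ^ p.2 * Real.sin θ ^ (2*(p.1 + p.2)) with hf_def
  have hpt : ∀ θ : ℝ,
      (1 - y * Real.sin θ ^ 2)⁻¹ * (Real.sqrt (1 - x * Real.sin θ ^ 2))⁻¹ = ∑' p, f p θ := by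
    intro θ
    obtain ⟨hx1', hx2'⟩ := sin_sq_mem hx0 hx1 θ
    obtain ⟨hy1', hy2'⟩ := sin_sq_mem hy0 hy1 θ
    have hX : HasSum (fun m => acoef m * (x * Real.sin θ^2) ^ m)
        ((Real.sqrt (1 - x * Real.sin θ^2))⁻¹) := hasSum_acoef_mul_pow hx1' hx2'
    have hY : HasSum (fun n => (y * Real.sin θ^2) ^ n) ((1 - y * Real.sin θ^2)⁻¹) :=
      hasSum_geometric_of_lt_one hy1' hy2'
    have hprod : Summable (fun p : ℕ × ℕ =>
        (acoef p.1 * (x * Real.sin θ^2) ^ p.1) * (y * Real.sin θ^2) ^ p.2) :=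
      hX.summable.mul_of_nonneg hY.summable
        (fun m => mul_nonneg (acoef_nonneg m) (pow_nonneg hx1' m))
        (fun n => pow_nonneg hy1' n)
    have := (hX.mul hY hprod).tsum_eq
    rw [mul_comm ((1 - y * Real.sin θ ^ 2)⁻¹) ((Real.sqrt (1 - x * Real.sin θ ^ 2))⁻¹), ← this]
    apply tsum_congr
    intro p
    show acoef p.1 * (x * Real.sin θ^2)^p.1 * (y * Real.sin θ^2)^p.2 = f p θ
    simp only [hf_def]
    rw [mul_pow, mul_pow, pow_mul, pow_add]
    ring
  have hCsum : Summable (fun p : ℕ × ℕ => x ^ p.1 * y ^ p.2) :=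
    (summable_geometric_of_lt_one hx0 hx1).mul_of_nonneg
      (summable_geometric_of_lt_one hy0 hy1)
      (fun m => pow_nonneg hx0 m) (fun n => pow_nonneg hy0 n)
  have hswap : ∫ θ in Ioc (0:ℝ) (π/2), (∑' p, f p θ) = ∑' p, ∫ θ in Ioc (0:ℝ) (π/2), f p θ := by
    apply my_integral_tsum (C := fun p : ℕ × ℕ => x ^ p.1 * y ^ p.2)
    · intro p; fun_prop
    · intro p θ
      simp only [hf_def, norm_mul, norm_pow]
      have h1 : ‖acoef p.1‖ ≤ 1 := by
        rw [Real.norm_eq_abs, abs_of_nonneg (acoef_nonneg p.1)]; exact acoef_le_one p.1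
      have h2 : ‖Real.sin θ‖ ^ (2*(p.1+p.2)) ≤ 1 :=
        pow_le_one₀ (norm_nonneg _) (by simpa using Real.abs_sin_le_one θ)
      have h3 : ‖x‖ ^ p.1 = x ^ p.1 := by rw [Real.norm_eq_abs, abs_of_nonneg hx0]
      have h4 : ‖y‖ ^ p.2 = y ^ p.2 := by rw [Real.norm_eq_abs, abs_of_nonneg hy0]
      calc ‖acoef p.1‖ * ‖x‖ ^ p.1 * ‖y‖ ^ p.2 * ‖Real.sin θ‖ ^ (2*(p.1+p.2))
          ≤ 1 * ‖x‖ ^ p.1 * ‖y‖ ^ p.2 * 1 := by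
            apply mul_le_mul _ h2 (by positivity) (by positivity)
            apply mul_le_mul _ le_rfl (by positivity) (by positivity)
            apply mul_le_mul h1 le_rfl (by positivity) zero_le_one
        _ = x ^ p.1 * y ^ p.2 := by rw [one_mul, mul_one, h3, h4]
    · exact hCsum
  have hint : ∀ p : ℕ × ℕ, ∫ θ in Ioc (0:ℝ) (π/2), f p θ
      = acoef p.1 * x ^ p.1 * y ^ p.2 * (π/2 * acoef (p.1 + p.2)) := by
    intro p
    simp only [hf_def]
    rw [MeasureTheory.integral_const_mul, ← intervalIntegral.integral_of_le (by positivity),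
      integral_sin_pow_even']
  rw [setIntegral_congr_fun measurableSet_Ioc (fun θ _ => hpt θ), hswap]
  rw [appellF1, ← tsum_mul_left]
  apply tsum_congr
  intro p
  rw [hint p, poch_one, poch_one]
  have h1 : (0:ℝ) < p.1.factorial := by exact_mod_cast p.1.factorial_pos
  have h2 : (0:ℝ) < p.2.factorial := by exact_mod_cast p.2.factorial_pos
  have h3 : (0:ℝ) < (p.1+p.2).factorial := by exact_mod_cast (p.1+p.2).factorial_pos
  rw [acoef, acoef]
  field_simp

theorem stmt_10 (a E L Q r e Δ P zn zp : ℝ) (ha : a ≠ 0) (hE : E ^ 2 < 1)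
    (hΔ : Δ = r ^ 2 + a ^ 2 + e ^ 2 - 2 * r) (hΔ0 : Δ ≠ 0)
    (hP : P = E * (r ^ 2 + a ^ 2) - L * a)
    (h0 : 0 < zn) (h1 : zn < 1) (h2 : zn < zp)
    (hroots : ∀ z : ℝ,
        a ^ 2 * (1 - E ^ 2) * z ^ 2 - (a ^ 2 * (1 - E ^ 2) + L ^ 2 + Q) * z + Q
          = a ^ 2 * (1 - E ^ 2) * (z - zn) * (z - zp)) :
    ∫ z in (0 : ℝ)..zn,
        ((a * P / Δ - a * E) + L / (1 - z)) /
          (2 * Real.sqrt z * (|a| * Real.sqrt (1 - E ^ 2)) *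
            Real.sqrt ((zp - z) * (zn - z)))
      = Real.pi / (2 * |a| * Real.sqrt (1 - E ^ 2) * Real.sqrt zp) *
          (L * appellF1 (1 / 2) (1 / 2) 1 1 (zn / zp) zn +
            (a * P / Δ - a * E) * gaussF (1 / 2) (1 / 2) 1 (zn / zp)) := by
  clear hΔ hP hroots
  have hzp : (0:ℝ) < zp := h0.trans h2
  have hE1 : (0:ℝ) < 1 - E ^ 2 := by linarith
  have hsE : 0 < Real.sqrt (1 - E ^ 2) := Real.sqrt_pos.mpr hE1
  have habs : 0 < |a| := abs_pos.mpr ha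
  set c : ℝ := |a| * Real.sqrt (1 - E ^ 2) with hc_def
  have hc : 0 < c := mul_pos habs hsE
  set K : ℝ := a * P / Δ - a * E with hK_def
  set x : ℝ := zn / zp with hx_def
  have hx0 : 0 ≤ x := div_nonneg h0.le hzp.le
  have hx1 : x < 1 := (div_lt_one hzp).mpr h2
  have hxzp : x * zp = zn := div_mul_cancel₀ zn hzp.ne'
  have hszp : 0 < Real.sqrt zp := Real.sqrt_pos.mpr hzp
  have hpi2 : (0:ℝ) < π/2 := by positivity
  -- the substitution z = zn sin²θ
  set g : ℝ → ℝ := fun θ => zn * Real.sin θ ^ 2 with hg_def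
  set g' : ℝ → ℝ := fun θ => zn * (2 * Real.sin θ * Real.cos θ) with hg'_def
  have hmono : StrictMonoOn g (Icc 0 (π/2)) := by
    intro θ₁ hθ₁ θ₂ hθ₂ hlt
    have m₁ : θ₁ ∈ Icc (-(π/2)) (π/2) := ⟨by linarith [hθ₁.1], hθ₁.2⟩
    have m₂ : θ₂ ∈ Icc (-(π/2)) (π/2) := ⟨by linarith [hθ₂.1], hθ₂.2⟩
    have hs := Real.strictMonoOn_sin m₁ m₂ hlt
    have h1n : 0 ≤ Real.sin θ₁ :=
      Real.sin_nonneg_of_nonneg_of_le_pi hθ₁.1 (by linarith [hθ₁.2, Real.pi_pos])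
    simp only [hg_def]
    nlinarith [mul_pos h0 (mul_pos (sub_pos.mpr hs)
      (by linarith : (0:ℝ) < Real.sin θ₂ + Real.sin θ₁))]
  have hsub : Ioo (0:ℝ) (π/2) ⊆ Icc (0:ℝ) (π/2) := fun θ h => ⟨h.1.le, h.2.le⟩
  have hinj : InjOn g (Ioo 0 (π/2)) := (hmono.mono hsub).injOn
  have hg0 : g 0 = 0 := by simp [hg_def]
  have hgpi : g (π/2) = zn := by simp [hg_def]
  have himg : g '' (Ioo 0 (π/2)) = Ioo 0 zn := by
    apply Subset.antisymm
    · rintro v ⟨θ, hθ, rfl⟩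
      constructor
      · have := hmono ⟨le_refl 0, hpi2.le⟩ (hsub hθ) hθ.1
        rwa [hg0] at this
      · have := hmono (hsub hθ) ⟨hpi2.le, le_refl _⟩ hθ.2
        rwa [hgpi] at this
    · have hcont : ContinuousOn g (Icc 0 (π/2)) := by fun_prop
      have := intermediate_value_Ioo hpi2.le hcont
      rwa [hg0, hgpi] at this
  have hderiv : ∀ θ ∈ Ioo (0:ℝ) (π/2), HasDerivWithinAt g (g' θ) (Ioo 0 (π/2)) θ := by
    intro θ _
    have h : HasDerivAt (fun t => zn * Real.sin t ^ 2) _ θ := ((Real.hasDerivAt_sin θ).pow 2).const_mul zn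
    have h2 : HasDerivAt g (g' θ) θ := by
      convert h using 1
      push_cast
      ring
    exact h2.hasDerivWithinAt
  -- pointwise identity on (0, π/2)
  have hpoint : ∀ θ ∈ Ioo (0:ℝ) (π/2),
      |g' θ| • ((K + L / (1 - g θ)) /
          (2 * Real.sqrt (g θ) * c * Real.sqrt ((zp - g θ) * (zn - g θ))))
      = (c * Real.sqrt zp)⁻¹ * (K * (Real.sqrt (1 - x * Real.sin θ ^ 2))⁻¹
          + L * ((1 - zn * Real.sin θ ^ 2)⁻¹ * (Real.sqrt (1 - x * Real.sin θ ^ 2))⁻¹)) := by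
    intro θ hθ
    have hs0 : 0 < Real.sin θ :=
      Real.sin_pos_of_pos_of_lt_pi hθ.1 (lt_trans hθ.2 (by linarith [Real.pi_pos]))
    have hco0 : 0 < Real.cos θ :=
      Real.cos_pos_of_mem_Ioo ⟨by linarith [hθ.1, Real.pi_pos], hθ.2⟩
    set s := Real.sin θ with hs_def
    set co := Real.cos θ with hco_def
    have hs1 : s ^ 2 ≤ 1 := Real.sin_sq_le_one θ
    have hxs : 0 < 1 - x * s ^ 2 := by nlinarith [sq_nonneg s]
    have hys : 0 < 1 - zn * s ^ 2 := by nlinarith [sq_nonneg s]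
    have hcs : co ^ 2 = 1 - s ^ 2 := Real.cos_sq' θ
    have e1 : Real.sqrt (g θ) = Real.sqrt zn * s := by
      simp only [hg_def]
      rw [Real.sqrt_mul h0.le, Real.sqrt_sq hs0.le]
    have e2 : zn - g θ = zn * co ^ 2 := by
      simp only [hg_def]; rw [hcs]; ring
    have e3 : zp - g θ = zp * (1 - x * s ^ 2) := by
      simp only [hg_def]
      linear_combination s ^ 2 * hxzp
    have e4 : Real.sqrt ((zp - g θ) * (zn - g θ))
        = Real.sqrt zp * Real.sqrt (1 - x * s ^ 2) * (Real.sqrt zn * co) := by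
      rw [e2, e3, Real.sqrt_mul (by positivity), Real.sqrt_mul hzp.le,
        Real.sqrt_mul h0.le, Real.sqrt_sq hco0.le]
    have e5 : |g' θ| = zn * (2 * s * co) := by
      simp only [hg'_def]
      rw [abs_of_pos (by positivity)]
    have e6 : 1 - g θ = 1 - zn * s ^ 2 := by simp only [hg_def, hs_def]
    rw [smul_eq_mul, e1, e4, e5, e6]
    have hA : Real.sqrt zn * Real.sqrt zn = zn := Real.mul_self_sqrt h0.le
    have e7 : 2 * (Real.sqrt zn * s) * c *
        (Real.sqrt zp * Real.sqrt (1 - x * s ^ 2) * (Real.sqrt zn * co))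
        = zn * (2 * s * co) * (c * (Real.sqrt zp * Real.sqrt (1 - x * s ^ 2))) := by
      linear_combination (2 * s * co * c * Real.sqrt zp * Real.sqrt (1 - x * s ^ 2)) * hA
    rw [e7]
    have hW : (0:ℝ) < c * (Real.sqrt zp * Real.sqrt (1 - x * s ^ 2)) := by positivity
    have hD : (0:ℝ) < zn * (2 * s * co) := by positivity
    field_simp
  -- assemble
  rw [intervalIntegral.integral_of_le h0.le, MeasureTheory.integral_Ioc_eq_integral_Ioo,
    ← himg,
    integral_image_eq_integral_abs_deriv_smul measurableSet_Ioo hderiv hinj,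
    setIntegral_congr_fun measurableSet_Ioo hpoint,
    ← MeasureTheory.integral_Ioc_eq_integral_Ioo,
    ← intervalIntegral.integral_of_le hpi2.le,
    intervalIntegral.integral_const_mul]
  have hsplit : ∫ θ in (0:ℝ)..(π/2),
      (K * (Real.sqrt (1 - x * Real.sin θ ^ 2))⁻¹
        + L * ((1 - zn * Real.sin θ ^ 2)⁻¹ * (Real.sqrt (1 - x * Real.sin θ ^ 2))⁻¹))
      = K * (π/2 * gaussF (1/2) (1/2) 1 x)
        + L * (π/2 * appellF1 (1/2) (1/2) 1 1 x zn) := by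
    have hcont1 : Continuous fun θ => (Real.sqrt (1 - x * Real.sin θ ^ 2))⁻¹ :=
      cont_inv_sqrt hx0 hx1
    have hcont2 : Continuous fun θ =>
        (1 - zn * Real.sin θ ^ 2)⁻¹ * (Real.sqrt (1 - x * Real.sin θ ^ 2))⁻¹ := by
      apply Continuous.mul _ hcont1
      apply Continuous.inv₀
      · fun_prop
      · intro θ
        have := Real.sin_sq_le_one θ
        nlinarith [sq_nonneg (Real.sin θ)]
    rw [intervalIntegral.integral_add (f := fun θ => K * (Real.sqrt (1 - x * Real.sin θ ^ 2))⁻¹) (g := fun θ => L * ((1 - zn * Real.sin θ ^ 2)⁻¹ * (Real.sqrt (1 - x * Real.sin θ ^ 2))⁻¹))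
      ((continuous_const.mul hcont1).intervalIntegrable 0 (π/2))
      ((continuous_const.mul hcont2).intervalIntegrable 0 (π/2)),
      intervalIntegral.integral_const_mul, intervalIntegral.integral_const_mul,
      gauss_integral hx0 hx1, appell_integral hx0 hx1 h0.le h1]
  rw [hsplit, hc_def]
  have hπ : (0:ℝ) < π := Real.pi_pos
  field_simp
  ring
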